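/- The quantity F_5(n) − α_5·n is unbounded in both directions: for every real C > 0 there exists n with F_5(n) − α_5·n > C and there exists m with F_5(m) − α_5·m < −C. Hence the discrepancy Δ_5 = sup_n |F_5(n) − α_5·n| is infinite. -/

import Mathlib

/-- Fuel-limited version of Hofstadter's recursion:
`Fa k fuel n` equals `F_k n` whenever `fuel ≥ n`. -/
def Fa (k : ℕ) : ℕ → ℕ → ℕ
  | 0, _ => 0
  | _ + 1, 0 => 0
  | fuel + 1, n + 1 => (n + 1) - (Fa k fuel)^[k] n

/-- Hofstadter's function `F_k` : `F k 0 = 0` and `F k n = n - (F k)^[k] (n-1)`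
for `n ≥ 1` (since `F_k m ≤ m`, the fuel `n` is always sufficient). -/
def F (k : ℕ) (n : ℕ) : ℕ := Fa k n n

/-- The function `L_k n = n + (F k)^[k-1] n`. -/
def L (k : ℕ) (n : ℕ) : ℕ := n + (F k)^[k - 1] n

set_option maxRecDepth 10000

lemma Fa_le (k fuel n : ℕ) : Fa k fuel n ≤ n := by
  match fuel, n with
  | 0, _ => simp [Fa]
  | _+1, 0 => simp [Fa]
  | fuel+1, n+1 => show (n+1) - (Fa k fuel)^[k] n ≤ n+1; omega

lemma iter_congr (g g' : ℕ → ℕ) (k f : ℕ) (hle : ∀ m, g m ≤ m)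
    (h : ∀ m ≤ f, g m = g' m) : ∀ m ≤ f, g^[k] m = g'^[k] m := by
  induction k with
  | zero => simp
  | succ k ih =>
    intro m hm
    rw [Function.iterate_succ_apply, Function.iterate_succ_apply,
      h m hm]
    exact ih _ (le_trans ((h m hm) ▸ hle m) hm)

lemma Fa_stable (k : ℕ) : ∀ fuel m, m ≤ fuel → Fa k fuel m = Fa k (fuel+1) m := by
  intro fuel
  induction fuel with
  | zero => intro m hm; interval_cases m; simp [Fa]
  | succ f ih =>
    intro m hm
    match m with
    | 0 => simp [Fa]
    | m+1 =>
      show (m+1) - (Fa k f)^[k] m = (m+1) - (Fa k (f+1))^[k] m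
      rw [iter_congr (Fa k f) (Fa k (f+1)) k f (Fa_le k f) (fun m hm => ih m hm) m (by omega)]

lemma Fa_eq_F (k : ℕ) : ∀ fuel m, m ≤ fuel → Fa k fuel m = F k m := by
  intro fuel
  induction fuel with
  | zero => intro m hm; interval_cases m; rfl
  | succ f ih =>
    intro m hm
    rcases Nat.lt_or_ge m (f+1) with h | h
    · rw [← Fa_stable k f m (by omega), ih m (by omega)]
    · have : m = f + 1 := by omega
      subst this; rfl

lemma F_le (k n : ℕ) : F k n ≤ n := Fa_le k n n

lemma F_rec (k n : ℕ) : F k (n+1) = (n+1) - (F k)^[k] n := by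
  show Fa k (n+1) (n+1) = _
  show (n+1) - (Fa k n)^[k] n = _
  rw [iter_congr (Fa k n) (F k) k n (Fa_le k n) (fun m hm => Fa_eq_F k n m hm) n le_rfl]

lemma F_iter_le (k i n : ℕ) : (F k)^[i] n ≤ n := by
  induction i generalizing n with
  | zero => simp
  | succ i ih => rw [Function.iterate_succ_apply]; exact le_trans (ih _) (F_le k n)

lemma F_rec' (k n : ℕ) : F k (n+1) + (F k)^[k] n = n + 1 := by
  rw [F_rec]; have := F_iter_le k k n; omega

lemma F_step : ∀ n, F 5 n ≤ F 5 (n+1) ∧ F 5 (n+1) ≤ F 5 n + 1 := by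
  intro n; induction n using Nat.strong_induction_on with
  | _ n ih =>
    match n with
    | 0 => constructor <;> simp [F, Fa]
    | m+1 =>
      have iter : ∀ i, (F 5)^[i] (m+1) ≤ (F 5)^[i] m + 1 ∧ (F 5)^[i] m ≤ (F 5)^[i] (m+1) := by
        intro i; induction i with
        | zero => simp
        | succ i ihi =>
          have hle := F_iter_le 5 i m
          rw [Function.iterate_succ_apply', Function.iterate_succ_apply']
          rcases ihi with ⟨h1, h2⟩
          have h : (F 5)^[i] (m+1) = (F 5)^[i] m ∨ (F 5)^[i] (m+1) = (F 5)^[i] m + 1 := by omega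
          rcases h with h | h
          · rw [h]; omega
          · rw [h]
            have := ih ((F 5)^[i] m) (by omega)
            omega
      have r1 := F_rec' 5 m
      have r2 := F_rec' 5 (m+1)
      have h5 := iter 5
      omega

lemma F_mono : Monotone (F 5) := by
  apply monotone_nat_of_le_succ
  intro n; exact (F_step n).1
lemma Ft0 : F 5 0 = 0 := rfl

lemma Ft1 : F 5 1 = 1 := by
  have h := F_rec' 5 0
  norm_num [Function.iterate_succ, Function.iterate_zero, Function.comp_apply, id_eq, Ft0] at h
  omega

lemma Ft2 : F 5 2 = 1 := by
  have h := F_rec' 5 1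
  norm_num [Function.iterate_succ, Function.iterate_zero, Function.comp_apply, id_eq, Ft1] at h
  omega

lemma Ft3 : F 5 3 = 2 := by
  have h := F_rec' 5 2
  norm_num [Function.iterate_succ, Function.iterate_zero, Function.comp_apply, id_eq, Ft1, Ft2] at h
  omega

lemma Ft4 : F 5 4 = 3 := by
  have h := F_rec' 5 3
  norm_num [Function.iterate_succ, Function.iterate_zero, Function.comp_apply, id_eq, Ft1, Ft2, Ft3] at h
  omega

lemma Ft5 : F 5 5 = 4 := by
  have h := F_rec' 5 4
  norm_num [Function.iterate_succ, Function.iterate_zero, Function.comp_apply, id_eq, Ft1, Ft2, Ft3, Ft4] at h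
  omega

lemma Ft6 : F 5 6 = 5 := by
  have h := F_rec' 5 5
  norm_num [Function.iterate_succ, Function.iterate_zero, Function.comp_apply, id_eq, Ft1, Ft2, Ft3, Ft4, Ft5] at h
  omega

lemma Ft7 : F 5 7 = 6 := by
  have h := F_rec' 5 6
  norm_num [Function.iterate_succ, Function.iterate_zero, Function.comp_apply, id_eq, Ft2, Ft3, Ft4, Ft5, Ft6] at h
  omega

lemma Ft8 : F 5 8 = 6 := by
  have h := F_rec' 5 7
  norm_num [Function.iterate_succ, Function.iterate_zero, Function.comp_apply, id_eq, Ft3, Ft4, Ft5, Ft6, Ft7] at h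
  omega

lemma Ft9 : F 5 9 = 7 := by
  have h := F_rec' 5 8
  norm_num [Function.iterate_succ, Function.iterate_zero, Function.comp_apply, id_eq, Ft3, Ft4, Ft5, Ft6, Ft8] at h
  omega

lemma Ft10 : F 5 10 = 7 := by
  have h := F_rec' 5 9
  norm_num [Function.iterate_succ, Function.iterate_zero, Function.comp_apply, id_eq, Ft4, Ft5, Ft6, Ft7, Ft9] at h
  omega

lemma Ft11 : F 5 11 = 8 := by
  have h := F_rec' 5 10
  norm_num [Function.iterate_succ, Function.iterate_zero, Function.comp_apply, id_eq, Ft4, Ft5, Ft6, Ft7, Ft10] at h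
  omega

lemma Ft12 : F 5 12 = 9 := by
  have h := F_rec' 5 11
  norm_num [Function.iterate_succ, Function.iterate_zero, Function.comp_apply, id_eq, Ft4, Ft5, Ft6, Ft8, Ft11] at h
  omega

lemma Ft13 : F 5 13 = 9 := by
  have h := F_rec' 5 12
  norm_num [Function.iterate_succ, Function.iterate_zero, Function.comp_apply, id_eq, Ft5, Ft6, Ft7, Ft9, Ft12] at h
  omega

lemma Ft14 : F 5 14 = 10 := by
  have h := F_rec' 5 13
  norm_num [Function.iterate_succ, Function.iterate_zero, Function.comp_apply, id_eq, Ft5, Ft6, Ft7, Ft9, Ft13] at h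
  omega

lemma Ft15 : F 5 15 = 11 := by
  have h := F_rec' 5 14
  norm_num [Function.iterate_succ, Function.iterate_zero, Function.comp_apply, id_eq, Ft5, Ft6, Ft7, Ft10, Ft14] at h
  omega

lemma Ft16 : F 5 16 = 12 := by
  have h := F_rec' 5 15
  norm_num [Function.iterate_succ, Function.iterate_zero, Function.comp_apply, id_eq, Ft5, Ft6, Ft8, Ft11, Ft15] at h
  omega

lemma Ft17 : F 5 17 = 12 := by
  have h := F_rec' 5 16
  norm_num [Function.iterate_succ, Function.iterate_zero, Function.comp_apply, id_eq, Ft6, Ft7, Ft9, Ft12, Ft16] at h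
  omega

lemma Ft18 : F 5 18 = 13 := by
  have h := F_rec' 5 17
  norm_num [Function.iterate_succ, Function.iterate_zero, Function.comp_apply, id_eq, Ft6, Ft7, Ft9, Ft12, Ft17] at h
  omega

lemma Ft19 : F 5 19 = 14 := by
  have h := F_rec' 5 18
  norm_num [Function.iterate_succ, Function.iterate_zero, Function.comp_apply, id_eq, Ft6, Ft7, Ft9, Ft13, Ft18] at h
  omega

lemma Ft20 : F 5 20 = 15 := by
  have h := F_rec' 5 19
  norm_num [Function.iterate_succ, Function.iterate_zero, Function.comp_apply, id_eq, Ft6, Ft7, Ft10, Ft14, Ft19] at h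
  omega

lemma Ft21 : F 5 21 = 16 := by
  have h := F_rec' 5 20
  norm_num [Function.iterate_succ, Function.iterate_zero, Function.comp_apply, id_eq, Ft6, Ft8, Ft11, Ft15, Ft20] at h
  omega

lemma Ft22 : F 5 22 = 16 := by
  have h := F_rec' 5 21
  norm_num [Function.iterate_succ, Function.iterate_zero, Function.comp_apply, id_eq, Ft7, Ft9, Ft12, Ft16, Ft21] at h
  omega

lemma Ft23 : F 5 23 = 17 := by
  have h := F_rec' 5 22
  norm_num [Function.iterate_succ, Function.iterate_zero, Function.comp_apply, id_eq, Ft7, Ft9, Ft12, Ft16, Ft22] at h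
  omega

lemma Ft24 : F 5 24 = 18 := by
  have h := F_rec' 5 23
  norm_num [Function.iterate_succ, Function.iterate_zero, Function.comp_apply, id_eq, Ft7, Ft9, Ft12, Ft17, Ft23] at h
  omega

lemma Ft25 : F 5 25 = 19 := by
  have h := F_rec' 5 24
  norm_num [Function.iterate_succ, Function.iterate_zero, Function.comp_apply, id_eq, Ft7, Ft9, Ft13, Ft18, Ft24] at h
  omega

lemma Ft26 : F 5 26 = 20 := by
  have h := F_rec' 5 25
  norm_num [Function.iterate_succ, Function.iterate_zero, Function.comp_apply, id_eq, Ft7, Ft10, Ft14, Ft19, Ft25] at h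
  omega

lemma Ft27 : F 5 27 = 21 := by
  have h := F_rec' 5 26
  norm_num [Function.iterate_succ, Function.iterate_zero, Function.comp_apply, id_eq, Ft8, Ft11, Ft15, Ft20, Ft26] at h
  omega

lemma Ft28 : F 5 28 = 21 := by
  have h := F_rec' 5 27
  norm_num [Function.iterate_succ, Function.iterate_zero, Function.comp_apply, id_eq, Ft9, Ft12, Ft16, Ft21, Ft27] at h
  omega

lemma Ft29 : F 5 29 = 22 := by
  have h := F_rec' 5 28
  norm_num [Function.iterate_succ, Function.iterate_zero, Function.comp_apply, id_eq, Ft9, Ft12, Ft16, Ft21, Ft28] at h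
  omega

lemma Ft30 : F 5 30 = 23 := by
  have h := F_rec' 5 29
  norm_num [Function.iterate_succ, Function.iterate_zero, Function.comp_apply, id_eq, Ft9, Ft12, Ft16, Ft22, Ft29] at h
  omega

lemma Ft31 : F 5 31 = 24 := by
  have h := F_rec' 5 30
  norm_num [Function.iterate_succ, Function.iterate_zero, Function.comp_apply, id_eq, Ft9, Ft12, Ft17, Ft23, Ft30] at h
  omega

lemma Ft32 : F 5 32 = 25 := by
  have h := F_rec' 5 31
  norm_num [Function.iterate_succ, Function.iterate_zero, Function.comp_apply, id_eq, Ft9, Ft13, Ft18, Ft24, Ft31] at h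
  omega

lemma Ft33 : F 5 33 = 26 := by
  have h := F_rec' 5 32
  norm_num [Function.iterate_succ, Function.iterate_zero, Function.comp_apply, id_eq, Ft10, Ft14, Ft19, Ft25, Ft32] at h
  omega

lemma Ft34 : F 5 34 = 26 := by
  have h := F_rec' 5 33
  norm_num [Function.iterate_succ, Function.iterate_zero, Function.comp_apply, id_eq, Ft11, Ft15, Ft20, Ft26, Ft33] at h
  omega

lemma Ft35 : F 5 35 = 27 := by
  have h := F_rec' 5 34
  norm_num [Function.iterate_succ, Function.iterate_zero, Function.comp_apply, id_eq, Ft11, Ft15, Ft20, Ft26, Ft34] at h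
  omega

lemma Ft36 : F 5 36 = 27 := by
  have h := F_rec' 5 35
  norm_num [Function.iterate_succ, Function.iterate_zero, Function.comp_apply, id_eq, Ft12, Ft16, Ft21, Ft27, Ft35] at h
  omega

lemma Ft37 : F 5 37 = 28 := by
  have h := F_rec' 5 36
  norm_num [Function.iterate_succ, Function.iterate_zero, Function.comp_apply, id_eq, Ft12, Ft16, Ft21, Ft27, Ft36] at h
  omega

lemma Ft38 : F 5 38 = 29 := by
  have h := F_rec' 5 37
  norm_num [Function.iterate_succ, Function.iterate_zero, Function.comp_apply, id_eq, Ft12, Ft16, Ft21, Ft28, Ft37] at h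
  omega

lemma Ft39 : F 5 39 = 30 := by
  have h := F_rec' 5 38
  norm_num [Function.iterate_succ, Function.iterate_zero, Function.comp_apply, id_eq, Ft12, Ft16, Ft22, Ft29, Ft38] at h
  omega

lemma Ft40 : F 5 40 = 31 := by
  have h := F_rec' 5 39
  norm_num [Function.iterate_succ, Function.iterate_zero, Function.comp_apply, id_eq, Ft12, Ft17, Ft23, Ft30, Ft39] at h
  omega

def A : ℕ → ℕ
  | 0 => 1
  | 1 => 2
  | 2 => 3
  | 3 => 4
  | 4 => 5
  | n + 5 => A (n+4) + A n

lemma A_rec (n : ℕ) : A (n+5) = A (n+4) + A n := rfl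

lemma A_pos : ∀ n, 0 < A n := by
  intro n
  induction n using Nat.strong_induction_on with
  | _ n ih =>
    match n with
    | 0 | 1 | 2 | 3 | 4 => simp [A]
    | m+5 => rw [A_rec]; have := ih (m+4) (by omega); omega

lemma A_lt (n : ℕ) : A n < A (n+1) := by
  match n with
  | 0 | 1 | 2 | 3 => simp [A]
  | m+4 =>
    rw [A_rec]
    have := A_pos m
    match m with
    | 0 => simp [A]
    | k+1 => rw [A_rec]; have := A_pos (k+1); have := A_pos (k+4); omega

lemma A_mono : StrictMono A := strictMono_nat_of_lt_succ A_lt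

lemma iter5 (g : ℕ → ℕ) (x : ℕ) : g^[5] x = g (g (g (g (g x)))) := by
  simp [Function.iterate_succ_apply]

lemma keyP : ∀ i, ∀ m ≤ A i, F 5 (A (i+4) + m) = A (i+3) + F 5 m := by
  intro i
  induction i using Nat.strong_induction_on with
  | _ i ih =>
    match i with
    | 0 => intro m hm; simp [A] at hm ⊢; interval_cases m <;>
        norm_num [A, Ft0, Ft1, Ft5, Ft6]
    | 1 => intro m hm; simp [A] at hm ⊢; interval_cases m <;>
        norm_num [A, Ft0, Ft1, Ft2, Ft6, Ft7, Ft8]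
    | 2 => intro m hm; simp [A] at hm ⊢; interval_cases m <;>
        norm_num [A, Ft0, Ft1, Ft2, Ft3, Ft8, Ft9, Ft10, Ft11]
    | 3 => intro m hm; simp [A] at hm ⊢; interval_cases m <;>
        norm_num [A, Ft0, Ft1, Ft2, Ft3, Ft4, Ft11, Ft12, Ft13, Ft14, Ft15]
    | 4 => intro m hm; simp [A] at hm ⊢; interval_cases m <;>
        norm_num [A, Ft0, Ft1, Ft2, Ft3, Ft4, Ft5, Ft15, Ft16, Ft17, Ft18, Ft19, Ft20]
    | 5 => intro m hm; simp [A] at hm ⊢; interval_cases m <;>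
        norm_num [A, Ft0, Ft1, Ft2, Ft3, Ft4, Ft5, Ft6, Ft20, Ft21, Ft22, Ft23, Ft24, Ft25, Ft26]
    | 6 => intro m hm; simp [A] at hm ⊢; interval_cases m <;>
        norm_num [A, Ft0, Ft1, Ft2, Ft3, Ft4, Ft5, Ft6, Ft7, Ft8,
          Ft26, Ft27, Ft28, Ft29, Ft30, Ft31, Ft32, Ft33, Ft34]
    | j+7 =>
      have val : ∀ u, u ≤ j + 6 → F 5 (A (u+4)) = A (u+3) := by
        intro u hu
        have h := ih u (by omega) 0 (by positivity)
        simpa [Ft0] using h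
      have goal : ∀ m ≤ A (j+7), F 5 (A (j+11) + m) = A (j+10) + F 5 m := by
        intro m hm
        induction m with
        | zero =>
          have h1 : A (j+11) = A (j+10) + A (j+6) := A_rec (j+6)
          have h2 : F 5 (A (j+10) + A (j+6)) = A (j+9) + F 5 (A (j+6)) :=
            ih (j+6) (by omega) (A (j+6)) le_rfl
          have h3 : F 5 (A (j+6)) = A (j+5) := val (j+2) (by omega)
          have h4 : A (j+10) = A (j+9) + A (j+5) := A_rec (j+5)
          simp only [Nat.add_zero, Ft0]
          rw [h1, h2, h3]
          omega
        | succ m ihm =>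
          have hmA : m ≤ A (j+7) := by omega
          have hm0 := ihm hmA
          set g := F 5 with hg
          have hmono : ∀ a b : ℕ, a ≤ b → g a ≤ g b := fun a b h => F_mono h
          have h1 : g m ≤ A (j+6) := by
            have h := hmono m (A (j+7)) hmA
            rw [val (j+3) (by omega)] at h
            exact h
          have hm1 : g (A (j+10) + g m) = A (j+9) + g (g m) := ih (j+6) (by omega) (g m) h1
          have h2 : g (g m) ≤ A (j+5) := by
            have h := hmono (g m) (A (j+6)) h1
            rw [val (j+2) (by omega)] at h
            exact h
          have hm2 : g (A (j+9) + g (g m)) = A (j+8) + g (g (g m)) := ih (j+5) (by omega) _ h2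
          have h3 : g (g (g m)) ≤ A (j+4) := by
            have h := hmono (g (g m)) (A (j+5)) h2
            rw [val (j+1) (by omega)] at h
            exact h
          have hm3 : g (A (j+8) + g (g (g m))) = A (j+7) + g (g (g (g m))) := ih (j+4) (by omega) _ h3
          have h4 : g (g (g (g m))) ≤ A (j+3) := by
            have h := hmono (g (g (g m))) (A (j+4)) h3
            rw [val j (by omega)] at h
            exact h
          have hm4 : g (A (j+7) + g (g (g (g m)))) = A (j+6) + g (g (g (g (g m)))) :=
            ih (j+3) (by omega) _ h4
          have hiter : g^[5] (A (j+11) + m) = A (j+6) + g^[5] m := by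
            rw [iter5, iter5, hm0, hm1, hm2, hm3, hm4]
          have r1 : g (A (j+11) + m + 1) + g^[5] (A (j+11) + m) = A (j+11) + m + 1 := F_rec' 5 _
          have r2 : g (m+1) + g^[5] m = m + 1 := F_rec' 5 m
          have hA : A (j+11) = A (j+10) + A (j+6) := A_rec (j+6)
          have hle : g^[5] m ≤ m := F_iter_le 5 5 m
          rw [hiter] at r1
          have hadd : A (j+11) + m + 1 = A (j+11) + (m+1) := by omega
          rw [hadd] at r1
          omega
      intro m hm
      exact goal m hm

lemma Av0 : A 0 = 1 := rfl
lemma Av1 : A 1 = 2 := rfl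
lemma Av2 : A 2 = 3 := rfl
lemma Av3 : A 3 = 4 := rfl
lemma Av4 : A 4 = 5 := rfl
lemma Av5 : A 5 = 6 := rfl
lemma Av6 : A 6 = 8 := rfl
lemma Av7 : A 7 = 11 := rfl
lemma Av8 : A 8 = 15 := rfl
lemma Av9 : A 9 = 20 := rfl
lemma Av10 : A 10 = 26 := rfl
lemma Av11 : A 11 = 34 := rfl
lemma Av12 : A 12 = 45 := rfl
lemma Av13 : A 13 = 60 := rfl
lemma Av14 : A 14 = 80 := rfl
lemma Av15 : A 15 = 106 := rfl
lemma Av16 : A 16 = 140 := rfl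
lemma Av17 : A 17 = 185 := rfl
lemma Av18 : A 18 = 245 := rfl
lemma Av19 : A 19 = 325 := rfl
lemma Av20 : A 20 = 431 := rfl
lemma Av21 : A 21 = 571 := rfl
lemma Av22 : A 22 = 756 := rfl
lemma Av23 : A 23 = 1001 := rfl

def Nsum (c : ℕ) : ℕ → ℕ
  | 0 => 0
  | t+1 => A (c + 6*t) + Nsum c t

lemma Nsum_le (c t : ℕ) : Nsum c (t+1) ≤ A (c + 6*t + 1) := by
  induction t with
  | zero =>
    show A (c + 6*0) + 0 ≤ A (c + 6*0 + 1)
    have := A_lt (c + 6*0)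
    omega
  | succ t ih =>
    show A (c + 6*(t+1)) + Nsum c (t+1) ≤ A (c + 6*(t+1) + 1)
    have h1 : c + 6*(t+1) = c + 6*t + 6 := by ring
    have h2 : A (c + 6*t + 2 + 5) = A (c + 6*t + 6) + A (c + 6*t + 2) := A_rec (c + 6*t + 2)
    have h3 : A (c + 6*t + 1) < A (c + 6*t + 2) := A_lt _
    have h4 : c + 6*t + 2 + 5 = c + 6*t + 6 + 1 := by omega
    rw [h1, h4] at *
    omega

lemma F_Nsum (c : ℕ) : ∀ t, F 5 (Nsum (c+4) t) = Nsum (c+3) t := by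
  intro t
  induction t with
  | zero => exact Ft0
  | succ t ih =>
    show F 5 (A (c + 4 + 6*t) + Nsum (c+4) t) = A (c + 3 + 6*t) + Nsum (c+3) t
    have hle : Nsum (c+4) t ≤ A (c + 6*t) := by
      match t with
      | 0 => exact Nat.zero_le _
      | t'+1 =>
        have := Nsum_le (c+4) t'
        have h2 : A (c + 4 + 6*t' + 1) ≤ A (c + 6*(t'+1)) := by
          apply A_mono.le_iff_le.mpr
          omega
        omega
    have hk := keyP (c + 6*t) (Nsum (c+4) t) hle
    have e1 : c + 6*t + 4 = c + 4 + 6*t := by ring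
    have e2 : c + 6*t + 3 = c + 3 + 6*t := by ring
    rw [e1, e2] at hk
    rw [hk, ih]

lemma natZ : ∀ j, A (j+9) + A (j+1) + A j = A (j+3) + A (j+7) + A (j+6) := by
  intro j
  induction j with
  | zero => norm_num [Av0, Av1, Av3, Av6, Av7, Av9]
  | succ j ih =>
    have r0 : A (j+5) = A (j+4) + A j := A_rec j
    have r2 : A (j+7) = A (j+6) + A (j+2) := A_rec (j+2)
    have r3 : A (j+8) = A (j+7) + A (j+3) := A_rec (j+3)
    have r4 : A (j+9) = A (j+8) + A (j+4) := A_rec (j+4)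
    have r5 : A (j+10) = A (j+9) + A (j+5) := A_rec (j+5)
    have e1 : j + 1 + 9 = j + 10 := by omega
    have e2 : j + 1 + 1 = j + 2 := by omega
    have e3 : j + 1 + 3 = j + 4 := by omega
    have e4 : j + 1 + 7 = j + 8 := by omega
    have e5 : j + 1 + 6 = j + 7 := by omega
    rw [e1, e2, e3, e4, e5]
    omega

noncomputable def dd (α : ℝ) (j : ℕ) : ℝ := (A j : ℝ) - α * (A (j+1) : ℝ)
noncomputable def ss (α : ℝ) (j : ℕ) : ℝ := dd α (j+6) - dd α j
noncomputable def QQ (α : ℝ) (j : ℕ) : ℝ :=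
  (1 - α^2) * (ss α j)^2 + α * (ss α j) * (ss α (j+1)) + α^2 * (ss α (j+1))^2

lemma ss_cubic (α : ℝ) (j : ℕ) : ss α (j+3) = ss α (j+1) + ss α j := by
  have h1 := natZ j
  have h2 := natZ (j+1)
  have c1 : ((A (j+9) : ℝ) + A (j+1) + A j) = (A (j+3) : ℝ) + A (j+7) + A (j+6) := by
    exact_mod_cast congrArg (Nat.cast : ℕ → ℝ) h1
  have c2 : ((A (j+10) : ℝ) + A (j+2) + A (j+1)) = (A (j+4) : ℝ) + A (j+8) + A (j+7) := by
    have := congrArg (Nat.cast : ℕ → ℝ) h2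
    push_cast at this
    push_cast
    convert this using 3 <;> omega
  simp only [ss, dd, Nat.add_assoc]
  norm_num
  linear_combination c1 - α * c2

lemma ss0 (α : ℝ) : ss α 0 = 7 - 9*α := by
  have h : ss α 0 = ((A 6 : ℝ) - α * A 7) - ((A 0 : ℝ) - α * A 1) := rfl
  rw [h, Av0, Av1, Av6, Av7]
  push_cast
  ring

lemma ss1 (α : ℝ) : ss α 1 = 9 - 12*α := by
  have h : ss α 1 = ((A 7 : ℝ) - α * A 8) - ((A 1 : ℝ) - α * A 2) := rfl
  rw [h, Av1, Av2, Av7, Av8]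
  push_cast
  ring

lemma ss2 (α : ℝ) : ss α 2 = 12 - 16*α := by
  have h : ss α 2 = ((A 8 : ℝ) - α * A 9) - ((A 2 : ℝ) - α * A 3) := rfl
  rw [h, Av2, Av3, Av8, Av9]
  push_cast
  ring

lemma EE {α : ℝ} (hc : α^3 + α^2 - 1 = 0) (hα : α ≠ 0) :
    ∀ j, α^2 * ss α (j+2) + α * ss α (j+1) + (1-α^2) * ss α j = 0 := by
  intro j
  induction j with
  | zero =>
    rw [ss0, ss1, ss2]
    norm_num
    linear_combination (-7 : ℝ) * hc
  | succ j ih =>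
    have h3 := ss_cubic α j
    have key : α * (α^2 * ss α (j+1+2) + α * ss α (j+1+1) + (1-α^2) * ss α (j+1)) = 0 := by
      have e1 : j + 1 + 2 = j + 3 := by omega
      have e2 : j + 1 + 1 = j + 2 := by omega
      rw [e1, e2, h3]
      linear_combination ih + (ss α j) * hc
    exact (mul_eq_zero.1 key).resolve_left hα

lemma QQ_step {α : ℝ} (hc : α^3 + α^2 - 1 = 0) (hα : α ≠ 0) (j : ℕ) :
    QQ α (j+1) = α * QQ α j := by
  have hE := EE hc hα j
  have h4 : (α^4 : ℝ) ≠ 0 := pow_ne_zero _ hα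
  apply mul_left_cancel₀ h4
  simp only [QQ]
  have e1 : j + 1 + 1 = j + 2 := by omega
  rw [e1]
  linear_combination (α^4 * ss α (j+2) + α^4 * ss α j - α^2 * ss α j) * hE +
    (α^4 * (ss α j)^2 - α^2 * (ss α j)^2 - α^3 * (ss α j) * (ss α (j+1))
      - α^4 * (ss α (j+1))^2) * hc

lemma QQ_pow {α : ℝ} (hc : α^3 + α^2 - 1 = 0) (hα : α ≠ 0) (j : ℕ) :
    QQ α j = α^j * QQ α 0 := by
  induction j with
  | zero => simp
  | succ j ih => rw [QQ_step hc hα, ih, pow_succ]; ring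

lemma sq_le_QQ {α : ℝ} (hα2 : α^2 ≤ 71/100) (j : ℕ) : (ss α j)^2 ≤ 25 * QQ α j := by
  simp only [QQ]
  nlinarith [sq_nonneg (10*α*(ss α (j+1)) + 5*(ss α j)), sq_nonneg (ss α j)]

lemma dd_step (α : ℝ) (j : ℕ) : dd α (j+6) = dd α j + ss α j := by
  simp only [ss]; ring

lemma dd_chain {α : ℝ} (c : ℕ) (B : ℝ) (hB : 0 < B)
    (hs : ∀ i : ℕ, |ss α (c + 6*i)| ≤ B * (1/2)^i) :
    ∀ i : ℕ, |dd α (c + 6*i) - dd α c| ≤ 2*B*(1 - (1/2)^i) := by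
  intro i
  induction i with
  | zero => simp
  | succ i ih =>
    have e1 : c + 6*(i+1) = (c + 6*i) + 6 := by ring
    rw [e1, dd_step]
    have h1 := hs i
    have h2 : |dd α (c + 6*i) + ss α (c + 6*i) - dd α c| ≤
        |dd α (c + 6*i) - dd α c| + |ss α (c + 6*i)| := by
      have := abs_add_le (dd α (c + 6*i) - dd α c) (ss α (c + 6*i))
      calc _ = |dd α (c + 6*i) - dd α c + ss α (c + 6*i)| := by ring_nf
        _ ≤ _ := this
    have h3 : (0:ℝ) < (1/2)^i := by positivity
    have h4 : ((1:ℝ)/2)^(i+1) = (1/2)^i * (1/2) := pow_succ _ _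
    calc |dd α (c + 6*i) + ss α (c + 6*i) - dd α c|
        ≤ 2*B*(1 - (1/2)^i) + B * (1/2)^i := by linarith
      _ = 2*B*(1 - (1/2)^(i+1)) := by rw [h4]; ring

lemma alpha_facts {α : ℝ} (hmem : α ∈ Set.Ioo (0:ℝ) 1) (hroot : α^5 + α - 1 = 0) :
    α^3 + α^2 - 1 = 0 ∧ 7548776/10^7 < α ∧ α < 7548777/10^7 := by
  obtain ⟨h0, h1⟩ := hmem
  have hfact : (α^2 - α + 1) * (α^3 + α^2 - 1) = 0 := by linear_combination hroot
  have hne : α^2 - α + 1 ≠ 0 := by nlinarith [sq_nonneg (α - 1/2)]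
  have hc : α^3 + α^2 - 1 = 0 := (mul_eq_zero.1 hfact).resolve_left hne
  refine ⟨hc, ?_, ?_⟩
  · nlinarith [sq_nonneg (α - 7548776/10^7), sq_nonneg (α + 7548776/10^7), h0]
  · nlinarith [sq_nonneg (α - 7548777/10^7), sq_nonneg (α + 7548777/10^7), h0]

lemma dd_bounds {α : ℝ} (hmem : α ∈ Set.Ioo (0:ℝ) 1) (hroot : α^5 + α - 1 = 0) :
    (∀ i : ℕ, 1/4 ≤ dd α (22 + 6*i)) ∧ (∀ i : ℕ, dd α (19 + 6*i) ≤ -(1/4)) := by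
  obtain ⟨hc, hal, hau⟩ := alpha_facts hmem hroot
  obtain ⟨h0, h1⟩ := hmem
  have hα : α ≠ 0 := ne_of_gt h0
  have h2l : (56984019098176:ℝ)/10^14 < α^2 := by nlinarith [hal, h0]
  have h2u : α^2 < (56984034195729:ℝ)/10^14 := by nlinarith [hau, h0]
  have h3 : α^3 = 1 - α^2 := by linarith
  have h4 : α^4 = α^2 + α - 1 := by linear_combination (α - 1) * hc
  have h6 : α^6 = α - α^2 := by linear_combination (α^3 - α^2 + α) * hc
  have h6pos : 0 ≤ α^6 := by positivity
  have h6u : α^6 ≤ 18504/10^5 := by rw [h6]; linarith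
  have h6q : α^6 ≤ 1/4 := by linarith
  have hQ0 : QQ α 0 = 4 - 7*α^2 := by
    have e : QQ α 0 = (1-α^2)*(ss α 0)^2 + α*(ss α 0)*(ss α 1) + α^2*(ss α 1)^2 := rfl
    rw [e, ss0, ss1]
    linear_combination (63*α - 45) * hc
  have hQ0u : QQ α 0 ≤ 11119/10^6 := by rw [hQ0]; linarith
  have hQ0pos : 0 ≤ QQ α 0 := by rw [hQ0]; linarith
  have h2u71 : α^2 ≤ 71/100 := by linarith
  -- generic bound on |ss|
  have hsb : ∀ (c : ℕ) (B : ℝ), 0 < B → 25 * (11119/10^6) * α^c ≤ B^2 →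
      ∀ i : ℕ, |ss α (c + 6*i)| ≤ B * (1/2)^i := by
    intro c B hB hcB i
    have hsq := sq_le_QQ h2u71 (c + 6*i)
    have hQv : QQ α (c + 6*i) = α^c * (α^6)^i * QQ α 0 := by
      rw [QQ_pow hc hα, pow_add, pow_mul]
    have hpowc : (0:ℝ) ≤ α^c := by positivity
    have hpi : (α^6)^i ≤ (1/4)^i := pow_le_pow_left₀ h6pos h6q i
    have hpi0 : (0:ℝ) ≤ (α^6)^i := by positivity
    have hq4 : ((1:ℝ)/4)^i = ((1/2)^i)^2 := by
      rw [sq, ← mul_pow]; norm_num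
    have hstep : QQ α (c + 6*i) ≤ α^c * (1/4)^i * (11119/10^6) := by
      rw [hQv]
      have t1 : α^c * (α^6)^i ≤ α^c * (1/4)^i :=
        mul_le_mul_of_nonneg_left hpi hpowc
      have t2 : α^c * (α^6)^i * QQ α 0 ≤ α^c * (1/4)^i * QQ α 0 :=
        mul_le_mul_of_nonneg_right t1 hQ0pos
      have t3 : α^c * (1/4)^i * QQ α 0 ≤ α^c * (1/4)^i * (11119/10^6) := by
        apply mul_le_mul_of_nonneg_left hQ0u
        positivity
      linarith
    have h14 : (0:ℝ) ≤ (1/4)^i := by positivity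
    have hfin : (ss α (c + 6*i))^2 ≤ (B * (1/2)^i)^2 := by
      have e : (B * (1/2)^i)^2 = B^2 * ((1/2)^i)^2 := by ring
      rw [e, ← hq4]
      have hmul := mul_le_mul_of_nonneg_right hcB h14
      nlinarith [hsq, hstep, hmul]
    have hBp : (0:ℝ) ≤ B * (1/2)^i := by positivity
    have hab := abs_le_of_sq_le_sq' hfin hBp
    rw [abs_le]
    exact hab
  -- positive side, c = 22, B = 49/2000
  have ha22 : α^22 ≤ (18504/10^5)^3 * (324719/10^6) := by
    have e : α^22 = (α^6)^3 * α^4 := by ring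
    have h4u : α^4 ≤ 324719/10^6 := by rw [h4]; linarith
    have h4p : (0:ℝ) ≤ α^4 := by positivity
    have h63 : (α^6)^3 ≤ (18504/10^5)^3 := by
      apply pow_le_pow_left₀ h6pos h6u
    rw [e]
    have : (0:ℝ) ≤ (18504/10^5)^3 := by positivity
    nlinarith [h63, h4u, h4p]
  have hb22 : 25 * (11119/10^6) * α^22 ≤ ((49:ℝ)/2000)^2 := by
    have h := mul_le_mul_of_nonneg_left ha22 (show (0:ℝ) ≤ 25 * (11119/10^6) by norm_num)
    calc 25 * (11119/10^6) * α^22 ≤ 25 * (11119/10^6) * ((18504/10^5)^3 * (324719/10^6)) := h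
      _ ≤ ((49:ℝ)/2000)^2 := by norm_num
  have hs22 := hsb 22 (49/2000) (by norm_num) hb22
  have hch22 := dd_chain 22 (49/2000) (by norm_num) hs22
  -- negative side, c = 19, B = 37/1000
  have ha19 : α^19 ≤ (18504/10^5)^3 * (7548777/10^7) := by
    have e : α^19 = (α^6)^3 * α := by ring
    have h63 : (α^6)^3 ≤ (18504/10^5)^3 := pow_le_pow_left₀ h6pos h6u 3
    rw [e]
    nlinarith [h63, hau, h0, pow_nonneg h6pos 3]
  have hb19 : 25 * (11119/10^6) * α^19 ≤ ((37:ℝ)/1000)^2 := by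
    have h := mul_le_mul_of_nonneg_left ha19 (show (0:ℝ) ≤ 25 * (11119/10^6) by norm_num)
    calc 25 * (11119/10^6) * α^19 ≤ 25 * (11119/10^6) * ((18504/10^5)^3 * (7548777/10^7)) := h
      _ ≤ ((37:ℝ)/1000)^2 := by norm_num
  have hs19 := hsb 19 (37/1000) (by norm_num) hb19
  have hch19 := dd_chain 19 (37/1000) (by norm_num) hs19
  have hd22 : dd α 22 = 756 - 1001*α := by
    simp only [dd]
    norm_num [Av22, Av23]
    ring
  have hd19 : dd α 19 = 325 - 431*α := by
    simp only [dd]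
    norm_num [Av19, Av20]
    ring
  constructor
  · intro i
    have h := abs_le.1 (hch22 i)
    have hp : (0:ℝ) < (1/2)^i := by positivity
    rw [hd22] at h
    linarith [h.1, hau, hp.le]
  · intro i
    have h := abs_le.1 (hch19 i)
    have hp : (0:ℝ) < (1/2)^i := by positivity
    rw [hd19] at h
    linarith [h.2, hal, hp.le]

lemma pos_sum {α : ℝ} (h : ∀ i : ℕ, 1/4 ≤ dd α (22 + 6*i)) :
    ∀ t : ℕ, (t:ℝ)/4 ≤ (Nsum 22 t : ℝ) - α * (Nsum 23 t) := by
  intro t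
  induction t with
  | zero => simp [Nsum]
  | succ t ih =>
    have e22 : Nsum 22 (t+1) = A (22 + 6*t) + Nsum 22 t := rfl
    have e23 : Nsum 23 (t+1) = A (23 + 6*t) + Nsum 23 t := rfl
    have hdd := h t
    have edd : dd α (22 + 6*t) = (A (22 + 6*t) : ℝ) - α * (A (23 + 6*t)) := by
      have e : 22 + 6*t + 1 = 23 + 6*t := by omega
      simp only [dd, e]
    rw [e22, e23]
    push_cast
    rw [edd] at hdd
    push_cast at ih
    ring_nf
    ring_nf at ih hdd
    linarith

lemma neg_sum {α : ℝ} (h : ∀ i : ℕ, dd α (19 + 6*i) ≤ -(1/4)) :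
    ∀ t : ℕ, (Nsum 19 t : ℝ) - α * (Nsum 20 t) ≤ -((t:ℝ)/4) := by
  intro t
  induction t with
  | zero => simp [Nsum]
  | succ t ih =>
    have e19 : Nsum 19 (t+1) = A (19 + 6*t) + Nsum 19 t := rfl
    have e20 : Nsum 20 (t+1) = A (20 + 6*t) + Nsum 20 t := rfl
    have hdd := h t
    have edd : dd α (19 + 6*t) = (A (19 + 6*t) : ℝ) - α * (A (20 + 6*t)) := by
      have e : 19 + 6*t + 1 = 20 + 6*t := by omega
      simp only [dd, e]
    rw [e19, e20]
    push_cast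
    rw [edd] at hdd
    push_cast at ih
    ring_nf
    ring_nf at ih hdd
    linarith


/-- `F_5 n - α_5 n` is unbounded in both directions, hence the discrepancy
`Δ_5 = sup |F_5 n - α_5 n|` is infinite. -/
theorem discrepancy_infinite_five (α : ℝ)
    (hα : α ∈ Set.Ioo (0 : ℝ) 1) (hαroot : α ^ 5 + α - 1 = 0) :
    (∀ C : ℝ, 0 < C →
      (∃ n : ℕ, C < (F 5 n : ℝ) - α * n) ∧ (∃ m : ℕ, (F 5 m : ℝ) - α * m < -C)) ∧
    ¬ BddAbove (Set.range fun n : ℕ => |(F 5 n : ℝ) - α * n|) := by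
  have hroot : α^5 + α - 1 = 0 := hαroot
  obtain ⟨hpos, hneg⟩ := dd_bounds hα hroot
  have hFpos : ∀ t : ℕ, F 5 (Nsum 23 t) = Nsum 22 t := fun t => F_Nsum 19 t
  have hFneg : ∀ t : ℕ, F 5 (Nsum 20 t) = Nsum 19 t := fun t => F_Nsum 16 t
  have key : ∀ C : ℝ, 0 < C →
      (∃ n : ℕ, C < (F 5 n : ℝ) - α * n) ∧ (∃ m : ℕ, (F 5 m : ℝ) - α * m < -C) := by
    intro C hC
    obtain ⟨t, ht⟩ := exists_nat_gt (4*C)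
    constructor
    · refine ⟨Nsum 23 t, ?_⟩
      have h1 := pos_sum hpos t
      rw [hFpos t]
      have : C < (t:ℝ)/4 := by linarith
      linarith
    · refine ⟨Nsum 20 t, ?_⟩
      have h1 := neg_sum hneg t
      rw [hFneg t]
      have : C < (t:ℝ)/4 := by linarith
      linarith
  refine ⟨key, ?_⟩
  rintro ⟨M, hM⟩
  obtain ⟨⟨n, hn⟩, -⟩ := key (|M| + 1) (by positivity)
  have h1 : |(F 5 n : ℝ) - α * n| ≤ M := hM ⟨n, rfl⟩
  have h2 : (F 5 n : ℝ) - α * n ≤ |(F 5 n : ℝ) - α * n| := le_abs_self _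
  have h3 : M ≤ |M| := le_abs_self M
  linarith
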